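/- arXiv:1408.5515 — 4 statements merged into one kernel-verified Lean document; each statement's English description precedes it below -/
import Mathlib

section
/- Let R be a commutative Noetherian ring, F a finitely generated R-module, and M = Q_1 ∩ … ∩ Q_m a reduced primary decomposition of a submodule M ⊆ F, with Q_i being P_i-primary in F. Let P = P_i for some i, and let Q be any P-primary submodule of F with M ⊆ Q. Then M = Q_1 ∩ … ∩ Q_{i-1} ∩ Q ∩ Q_{i+1} ∩ … ∩ Q_m (i.e., Q is a valid P-primary component of M) if and only if Q ∩ (M_[P] :_F P^∞) = M_[P]. -/
/-- `N` is a `P`-primary submodule of `F`: `N` is proper, and `r • v ∈ N` implies `v ∈ N` or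
`r ∈ √(Ann_R(F/N))`, where `P = √(Ann_R(F/N)) = √(N :_R F)`. -/
def Submodule.IsPrimaryIn {R F : Type*} [CommRing R] [AddCommGroup F] [Module R F]
    (P : Ideal R) (N : Submodule R F) : Prop :=
  N ≠ ⊤ ∧ (∀ (r : R) (v : F), r • v ∈ N → v ∈ N ∨ r ∈ (Submodule.colon N ⊤).radical) ∧
    P = (Submodule.colon N ⊤).radical

/-- `M_[P] = {b ∈ F | (M :_R b) ⊄ P}`. -/
def Submodule.locSet {R F : Type*} [CommRing R] [AddCommGroup F] [Module R F]
    (M : Submodule R F) (P : Ideal R) : Set F :=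
  {b : F | ¬ Submodule.colon M (Submodule.span R {b}) ≤ P}

/-- `(M_[P] :_F P^∞) = ⋃_{n ≥ 1} {b ∈ F | P^n • b ⊆ M_[P]}`. -/
def Submodule.satSet {R F : Type*} [CommRing R] [AddCommGroup F] [Module R F]
    (M : Submodule R F) (P : Ideal R) : Set F :=
  {b : F | ∃ n : ℕ, 1 ≤ n ∧ ∀ p ∈ P ^ n, p • b ∈ Submodule.locSet M P}

/-- Given a reduced primary decomposition `M = Q_1 ∩ … ∩ Q_m` of `M ⊆ F`, `P = P_i`, and a
`P`-primary submodule `Q'` of `F` containing `M`: `Q'` is a valid `P`-primary component of `M`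
iff `Q' ∩ (M_[P] :_F P^∞) = M_[P]`. -/
theorem primaryComponent_iff {R F : Type*} [CommRing R] [IsNoetherianRing R]
    [AddCommGroup F] [Module R F] [Module.Finite R F] {m : ℕ} (M : Submodule R F)
    (Q : Fin m → Submodule R F) (P : Fin m → Ideal R) (hprime : ∀ i, (P i).IsPrime)
    (hQ : ∀ i, Submodule.IsPrimaryIn (P i) (Q i))
    (hdec : M = ⨅ i, Q i) (hdist : Function.Injective P)
    (hirr : ∀ i, ¬ (⨅ j ∈ {j | j ≠ i}, Q j) ≤ Q i)
    (i : Fin m) (Q' : Submodule R F) (hQ' : Submodule.IsPrimaryIn (P i) Q') (hMQ' : M ≤ Q') :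
    M = Q' ⊓ ⨅ j ∈ {j | j ≠ i}, Q j ↔
      (Q' : Set F) ∩ Submodule.satSet M (P i) = Submodule.locSet M (P i) := by
  classical
  have hPi := hprime i
  -- from primariness: if `b ∉ N` and `M ≤ N`, the colon ideal `(M : b)` lies in `Pn`
  have hcolon : ∀ {N : Submodule R F} {Pn : Ideal R}, Submodule.IsPrimaryIn Pn N → M ≤ N →
      ∀ {b : F}, b ∉ N → Submodule.colon M (Submodule.span R {b}) ≤ Pn := by
    intro N Pn hN hMN b hb r hr
    have hrb : r • b ∈ M := Submodule.mem_colon_span_singleton.mp hr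
    rcases hN.2.1 r b (hMN hrb) with h | h
    · exact absurd h hb
    · rw [hN.2.2]; exact h
  have hMle : ∀ j, M ≤ Q j := fun j => hdec ▸ iInf_le Q j
  -- membership in locSet forces membership in each `Q j` with `P j ≤ P i`
  have hlocQ : ∀ {b : F}, b ∈ M.locSet (P i) → ∀ j, P j ≤ P i → b ∈ Q j := by
    intro b hb j hj
    by_contra hbj
    exact hb ((hcolon (hQ j) (hMle j) hbj).trans hj)
  -- a multiplier `r ∉ P i` sending everything into `Q j` for the `j` with `¬ P j ≤ P i`
  have hmult : ∃ r : R, r ∉ P i ∧ ∀ j, ¬ P j ≤ P i → ∀ v : F, r • v ∈ Q j := by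
    have h1 : ∀ j, ∃ t : R, t ∉ P i ∧ (¬ P j ≤ P i → ∀ v : F, t • v ∈ Q j) := by
      intro j
      by_cases hj : P j ≤ P i
      · exact ⟨1, fun h => hPi.ne_top ((Ideal.eq_top_iff_one _).mpr h),
          fun h => absurd hj h⟩
      · have hco : ¬ Submodule.colon (Q j) ⊤ ≤ P i := by
          intro h
          apply hj
          rw [(hQ j).2.2]
          exact hPi.radical_le_iff.mpr h
        obtain ⟨t, ht, hti⟩ := SetLike.not_le_iff_exists.mp hco
        exact ⟨t, hti, fun _ v => Submodule.mem_colon.mp ht v trivial⟩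
    choose t hti htQ using h1
    refine ⟨∏ j, t j, ?_, ?_⟩
    · intro h
      obtain ⟨j, _, hj⟩ := Ideal.IsPrime.prod_mem_iff.mp h
      exact hti j hj
    · intro j hj v
      rw [← Finset.mul_prod_erase _ _ (Finset.mem_univ j), mul_smul]
      exact htQ j hj _
  -- converse characterization of locSet
  have hQloc : ∀ {b : F}, (∀ j, P j ≤ P i → b ∈ Q j) → b ∈ M.locSet (P i) := by
    intro b hb
    obtain ⟨r, hr, hrQ⟩ := hmult
    intro hle
    apply hr
    apply hle
    rw [Submodule.mem_colon_span_singleton, hdec, Submodule.mem_iInf]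
    intro j
    by_cases hj : P j ≤ P i
    · exact Submodule.smul_mem _ r (hb j hj)
    · exact hrQ j hj b
  -- characterization of satSet
  have hsat : ∀ {b : F}, b ∈ M.satSet (P i) ↔ ∀ j, j ≠ i → P j ≤ P i → b ∈ Q j := by
    intro b
    constructor
    · rintro ⟨n, _, hb⟩ j hji hj
      have hlt : ¬ P i ≤ P j := fun h => hji (hdist (le_antisymm hj h))
      obtain ⟨p, hpi, hpj⟩ := SetLike.not_le_iff_exists.mp hlt
      have hpb : p ^ n • b ∈ Q j := hlocQ (hb _ (Ideal.pow_mem_pow hpi n)) j hj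
      rcases (hQ j).2.1 (p ^ n) b hpb with h | h
      · exact h
      · exfalso
        rw [← (hQ j).2.2] at h
        exact hpj ((hprime j).mem_of_pow_mem n h)
    · intro hb
      obtain ⟨n, hn⟩ := Ideal.exists_pow_le_of_le_radical_of_fg (le_of_eq (hQ i).2.2)
        (IsNoetherian.noetherian _)
      refine ⟨n + 1, Nat.le_add_left 1 n, fun p hp => ?_⟩
      apply hQloc
      intro j hj
      by_cases hji : j = i
      · subst hji
        have hpc : p ∈ Submodule.colon (Q j) ⊤ :=
          hn (Ideal.pow_le_pow_right (Nat.le_succ n) hp)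
        exact Submodule.mem_colon.mp hpc b trivial
      · exact Submodule.smul_mem _ p (hb j hji hj)
  -- locSet ⊆ Q'
  have hlocQ' : M.locSet (P i) ⊆ ↑Q' := by
    intro b hb
    by_contra hbQ'
    exact hb (hcolon hQ' hMQ' hbQ')
  constructor
  · intro hM2
    ext b
    constructor
    · rintro ⟨hbQ', hbsat⟩
      have hbj := hsat.mp hbsat
      obtain ⟨r, hr, hrQ⟩ := hmult
      have hrbM : r • b ∈ M := by
        rw [hM2]
        refine Submodule.mem_inf.mpr ⟨Submodule.smul_mem _ r hbQ', ?_⟩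
        rw [Submodule.mem_iInf]
        intro j
        rw [Submodule.mem_iInf]
        intro hji
        by_cases hj : P j ≤ P i
        · exact Submodule.smul_mem _ r (hbj j hji hj)
        · exact hrQ j hj b
      have hbQi : b ∈ Q i := by
        rcases (hQ i).2.1 r b (hMle i hrbM) with h | h
        · exact h
        · rw [← (hQ i).2.2] at h
          exact absurd h hr
      refine hQloc fun j hj => ?_
      by_cases hji : j = i
      · exact hji ▸ hbQi
      · exact hbj j hji hj
    · intro hb
      exact ⟨hlocQ' hb, hsat.mpr fun j hji hj => hlocQ hb j hj⟩
  · intro hset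
    apply le_antisymm
    · exact le_inf hMQ' (le_iInf fun j => le_iInf fun _ => hMle j)
    · intro b hb
      obtain ⟨hbQ', hbB⟩ := Submodule.mem_inf.mp hb
      have hbB' : ∀ j, j ≠ i → b ∈ Q j := fun j hj =>
        (Submodule.mem_iInf _).mp ((Submodule.mem_iInf _).mp hbB j) hj
      have hbloc : b ∈ M.locSet (P i) := by
        rw [← hset]
        exact ⟨hbQ', hsat.mpr fun j hji _ => hbB' j hji⟩
      have hbQi : b ∈ Q i := hlocQ hbloc i le_rfl
      rw [hdec, Submodule.mem_iInf]
      intro j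
      by_cases hji : j = i
      · exact hji ▸ hbQi
      · exact hbB' j hji
end

section
/- Let R be a commutative Noetherian ring, F a finitely generated R-module, and M = Q_1 ∩ … ∩ Q_m a reduced primary decomposition of a submodule M ⊆ F, with Q_i being P_i-primary in F. If P_j ⊊ P are two of the associated primes of this decomposition, then (M_[P] :_F P^∞) ⊆ M_[P_j] and M_[P_j] ⊆ Q_j. -/
/-- If `P_j ⊊ P = P_i` are associated primes of a reduced primary decomposition
`M = Q_1 ∩ … ∩ Q_m`, then `(M_[P] :_F P^∞) ⊆ M_[P_j]` and `M_[P_j] ⊆ Q_j`. -/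
theorem satSet_subset_locSet_of_lt {R F : Type*} [CommRing R] [IsNoetherianRing R]
    [AddCommGroup F] [Module R F] [Module.Finite R F] {m : ℕ} (M : Submodule R F)
    (Q : Fin m → Submodule R F) (P : Fin m → Ideal R) (hprime : ∀ i, (P i).IsPrime)
    (hQ : ∀ i, Submodule.IsPrimaryIn (P i) (Q i))
    (hdec : M = ⨅ i, Q i) (hdist : Function.Injective P)
    (hirr : ∀ i, ¬ (⨅ j ∈ {j | j ≠ i}, Q j) ≤ Q i)
    (i j : Fin m) (hij : P j < P i) :
    Submodule.satSet M (P i) ⊆ Submodule.locSet M (P j) ∧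
      Submodule.locSet M (P j) ⊆ (Q j : Set F) := by
  obtain ⟨hQtop, hQprim, hQrad⟩ := hQ j
  constructor
  · rintro b ⟨n, hn, hb⟩
    obtain ⟨p, hpI, hpJ⟩ := SetLike.exists_of_lt hij
    have hp := hb _ (Ideal.pow_mem_pow hpI n)
    simp only [Submodule.locSet, Set.mem_setOf_eq] at hp ⊢
    intro hle
    apply hp
    intro r hr
    have hr' : r • p ^ n • b ∈ M := Submodule.mem_colon_span_singleton.1 hr
    rw [← smul_assoc, smul_eq_mul] at hr'
    have hrp : r * p ^ n ∈ P j := hle (Submodule.mem_colon_span_singleton.2 hr')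
    rcases (hprime j).mul_mem_iff_mem_or_mem.1 hrp with h | h
    · exact hij.le h
    · exact absurd ((hprime j).mem_of_pow_mem n h) hpJ
  · intro b hb
    simp only [Submodule.locSet, Set.mem_setOf_eq, SetLike.le_def, not_forall] at hb
    obtain ⟨r, hr, hrP⟩ := hb
    have hrb : r • b ∈ M := Submodule.mem_colon_span_singleton.1 hr
    have hQj : r • b ∈ Q j := by
      rw [hdec] at hrb; exact (Submodule.mem_iInf Q).1 hrb j
    rcases hQprim r b hQj with h | h
    · exact h
    · exact absurd (hQrad ▸ h) hrP
end

section
/- Let R be a commutative Noetherian ring, F a finitely generated R-module, and M = Q_1 ∩ … ∩ Q_m a reduced primary decomposition of a submodule M ⊆ F, with Q_i being P_i-primary in F. Then for any P = P_i of the decomposition, the saturation (M_[P] :_F P^∞) equals the intersection of those components Q_j whose associated prime satisfies P_j ⊊ P (the empty intersection being F). -/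

private lemma primary_pow_smul {R F : Type*} [CommRing R] [AddCommGroup F] [Module R F]
    {P : Ideal R} {Q : Submodule R F} (h : Submodule.IsPrimaryIn P Q) {p : R} (hp : p ∉ P)
    {b : F} : ∀ n : ℕ, p ^ n • b ∈ Q → b ∈ Q := by
  intro n
  induction n with
  | zero => simp
  | succ n ih =>
    intro hmem
    rw [pow_succ, mul_comm, mul_smul] at hmem
    rcases h.2.1 p _ hmem with h1 | h2
    · exact ih h1
    · exact absurd (h.2.2 ▸ h2) hp

/-- For a reduced primary decomposition `M = Q_1 ∩ … ∩ Q_m` and `P = P_i`,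
`(M_[P] :_F P^∞)` is the intersection of those `Q_j` with `P_j ⊊ P`
(the empty intersection being `F`). -/
theorem satSet_eq_iInf {R F : Type*} [CommRing R] [IsNoetherianRing R]
    [AddCommGroup F] [Module R F] [Module.Finite R F] {m : ℕ} (M : Submodule R F)
    (Q : Fin m → Submodule R F) (P : Fin m → Ideal R) (hprime : ∀ i, (P i).IsPrime)
    (hQ : ∀ i, Submodule.IsPrimaryIn (P i) (Q i))
    (hdec : M = ⨅ i, Q i) (hdist : Function.Injective P)
    (hirr : ∀ i, ¬ (⨅ j ∈ {j | j ≠ i}, Q j) ≤ Q i) (i : Fin m) :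
    Submodule.satSet M (P i) = ((⨅ j ∈ {j | P j < P i}, Q j : Submodule R F) : Set F) := by

  ext b
  simp only [SetLike.mem_coe, Submodule.mem_iInf, Set.mem_setOf_eq, Submodule.satSet,
    Set.mem_setOf_eq]
  constructor
  · rintro ⟨n, hn1, hn⟩ j hj
    obtain ⟨p, hpP, hpj⟩ := SetLike.exists_of_lt hj
    have hmem := hn (p ^ n) (Ideal.pow_mem_pow hpP n)
    rw [Submodule.locSet, Set.mem_setOf_eq] at hmem
    obtain ⟨r, hrc, hrP⟩ := SetLike.not_le_iff_exists.mp hmem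
    have hrm : r • (p ^ n • b) ∈ M := Submodule.mem_colon_span_singleton.mp hrc
    rw [hdec, Submodule.mem_iInf] at hrm
    rcases (hQ j).2.1 r _ (hrm j) with h1 | h2
    · exact primary_pow_smul (hQ j) hpj n h1
    · exact absurd (hj.le ((hQ j).2.2 ▸ h2)) hrP
  · intro hb
    obtain ⟨n, hn⟩ := Ideal.exists_radical_pow_le_of_fg (Submodule.colon (Q i) ⊤)
      (IsNoetherian.noetherian _)
    have hn' : P i ^ max n 1 ≤ Submodule.colon (Q i) ⊤ := by
      calc P i ^ max n 1 = ((Submodule.colon (Q i) ⊤).radical) ^ max n 1 := by rw [(hQ i).2.2]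
        _ ≤ ((Submodule.colon (Q i) ⊤).radical) ^ n := Ideal.pow_le_pow_right (le_max_left _ _)
        _ ≤ _ := hn
    have hc : ∀ j, ∃ c : R, c ∉ P i ∧ (¬ P j ≤ P i → c ∈ Submodule.colon (Q j) ⊤) := by
      intro j
      by_cases h : P j ≤ P i
      · exact ⟨1, fun h1 => (hprime i).ne_top ((Ideal.eq_top_iff_one _).mpr h1),
          fun hcontra => absurd h hcontra⟩
      · obtain ⟨r, hrj, hrP⟩ := SetLike.not_le_iff_exists.mp h
        have hrad : r ∈ (Submodule.colon (Q j) ⊤).radical := (hQ j).2.2 ▸ hrj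
        obtain ⟨k, hk⟩ := Ideal.mem_radical_iff.mp hrad
        exact ⟨r ^ k, fun hmem => hrP ((hprime i).mem_of_pow_mem _ hmem), fun _ => hk⟩
    choose c hc1 hc2 using hc
    have hrP : (∏ j, c j) ∉ P i := by
      intro hmem
      obtain ⟨j, _, hj⟩ := (Ideal.IsPrime.prod_mem_iff (hp := hprime i)).mp hmem
      exact hc1 j hj
    refine ⟨max n 1, le_max_right _ _, fun p hp => ?_⟩
    rw [Submodule.locSet, Set.mem_setOf_eq]
    intro hle
    apply hrP
    apply hle
    rw [Submodule.mem_colon_span_singleton]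
    rw [hdec, Submodule.mem_iInf]
    intro j
    by_cases h1 : P j < P i
    · exact Submodule.smul_mem _ _ (Submodule.smul_mem _ _ (hb j h1))
    · by_cases h2 : P j ≤ P i
      · have hji : j = i := hdist (le_antisymm h2 (by
          rcases h2.lt_or_eq with hlt | heq
          · exact absurd hlt h1
          · exact heq.ge))
        subst hji
        have hpb : p • b ∈ Q j := Submodule.mem_colon.mp (hn' hp) b (Set.mem_univ b)
        exact Submodule.smul_mem _ _ hpb
      · have hcj : (∏ j', c j') ∈ Submodule.colon (Q j) ⊤ := by
          obtain ⟨t, ht⟩ := Finset.dvd_prod_of_mem c (Finset.mem_univ j)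
          rw [ht]
          exact Ideal.mul_mem_right _ _ (hc2 j h2)
        exact Submodule.mem_colon.mp hcj _ (Set.mem_univ _)
end

section
/- Let R be a commutative Noetherian ring, F a finitely generated R-module, M ⊆ F a submodule admitting a reduced primary decomposition M = Q_1 ∩ … ∩ Q_m with Q_i being P_i-primary, and let P = P_i be a minimal (isolated) associated prime of M. Let Q be a P-primary submodule of F with M ⊆ Q ⊇ M_[P]. Then the map (M_[P] :_F P^∞)/M_[P] → F/Q induced by the inclusion (M_[P] :_F P^∞) ⊆ F is injective if and only if Q = M_[P], i.e., if and only if Q is the (unique) P-primary component of M. -/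
/-- Let `P = P_i` be a minimal associated prime of a reduced primary decomposition
`M = Q_1 ∩ … ∩ Q_m`, and `Q'` a `P`-primary submodule with `M ⊆ Q' ⊇ M_[P]`. The induced map
`(M_[P] :_F P^∞)/M_[P] → F/Q'` (sending the class of `b` mod `M_[P]` to its class mod `Q'`)
is injective iff `Q' = M_[P]`, i.e. iff `Q'` is the unique `P`-primary component of `M`. -/
theorem injective_iff_eq_locSet {R F : Type*} [CommRing R] [IsNoetherianRing R]
    [AddCommGroup F] [Module R F] [Module.Finite R F] {m : ℕ} (M : Submodule R F)
    (Q : Fin m → Submodule R F) (P : Fin m → Ideal R) (hprime : ∀ i, (P i).IsPrime)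
    (hQ : ∀ i, Submodule.IsPrimaryIn (P i) (Q i))
    (hdec : M = ⨅ i, Q i) (hdist : Function.Injective P)
    (hirr : ∀ i, ¬ (⨅ j ∈ {j | j ≠ i}, Q j) ≤ Q i)
    (i : Fin m) (hmin : ∀ j, ¬ P j < P i)
    (Q' : Submodule R F) (hQ' : Submodule.IsPrimaryIn (P i) Q') (hMQ' : M ≤ Q')
    (hlocQ' : Submodule.locSet M (P i) ⊆ (Q' : Set F)) :
    (∀ b ∈ Submodule.satSet M (P i), ∀ c ∈ Submodule.satSet M (P i),
        b - c ∈ Q' → b - c ∈ Submodule.locSet M (P i)) ↔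
      (Q' : Set F) = Submodule.locSet M (P i) := by
  obtain ⟨-, -, hPQi⟩ := hQ i
  have hprimei := hprime i
  -- Step 1: `Q i ⊆ M_[P i]`.
  have hQi_loc : (Q i : Set F) ⊆ Submodule.locSet M (P i) := by
    intro b hb
    have hchoice : ∀ j : Fin m, ∃ s : R, s ∉ P i ∧ (j ≠ i → s ∈ Submodule.colon (Q j) ⊤) := by
      intro j
      by_cases hj : j = i
      · refine ⟨1, fun h => hprimei.ne_top ((Ideal.eq_top_iff_one _).2 h), fun h => absurd hj h⟩
      · have hPj : ¬ P j ≤ P i := by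
          intro hle
          rcases lt_or_eq_of_le hle with h | h
          · exact hmin j h
          · exact hj (hdist h)
        obtain ⟨r, hrPj, hrPi⟩ := Set.not_subset.1 hPj
        obtain ⟨-, -, hPQj⟩ := hQ j
        rw [hPQj] at hrPj
        obtain ⟨k, hk⟩ := hrPj
        exact ⟨r ^ k, fun h => hrPi (hprimei.mem_of_pow_mem _ h), fun _ => hk⟩
    choose s hs1 hs2 using hchoice
    have ht : (∏ j, s j) ∉ P i := by
      intro h
      obtain ⟨j, -, hj⟩ := (Ideal.IsPrime.prod_mem_iff).1 h
      exact hs1 j hj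
    have htM : (∏ j, s j) • b ∈ M := by
      rw [hdec, Submodule.mem_iInf]
      intro l
      by_cases hl : l = i
      · subst hl
        exact Submodule.smul_mem _ _ hb
      · rw [← Finset.mul_prod_erase Finset.univ s (Finset.mem_univ l), mul_smul]
        exact Submodule.mem_colon.1 (hs2 l hl) _ (Submodule.mem_top (R := R))
    intro hle
    exact ht (hle (Submodule.mem_colon_span_singleton.2 htM))
  -- Step 2: the saturation set is everything.
  have hsat : ∀ b : F, b ∈ Submodule.satSet M (P i) := by
    obtain ⟨n, hn⟩ := Ideal.exists_radical_pow_le_of_fg (Submodule.colon (Q i) ⊤)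
      (IsNoetherian.noetherian _)
    intro b
    refine ⟨max n 1, le_max_right _ _, fun p hp => ?_⟩
    have hp' : p ∈ Submodule.colon (Q i) ⊤ := by
      apply hn
      rw [← hPQi]
      exact Ideal.pow_le_pow_right (le_max_left n 1) hp
    exact hQi_loc (Submodule.mem_colon.1 hp' b (Submodule.mem_top (R := R)))
  constructor
  · intro H
    refine Set.Subset.antisymm (fun b hb => ?_) hlocQ'
    have := H b (hsat b) 0 (hsat 0) (by simpa using hb)
    simpa using this
  · intro h b _ c _ hbc
    rw [← h]
    exact hbc
end
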